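/- Let f₁, f₂ : ℝⁿ → ℝ be convex functions and let x̄ ∈ ℝⁿ be a local minimizer of f = f₁ − f₂. Then x̄ is an inf-stationary point, i.e., ∂f₂(x̄) ⊆ ∂f₁(x̄). -/

import Mathlib

open scoped RealInnerProductSpace

/-- The ε-subdifferential of `g` at `x`. -/
def epsSubdiff {n : ℕ} (g : EuclideanSpace ℝ (Fin n) → ℝ) (ε : ℝ)
    (x : EuclideanSpace ℝ (Fin n)) : Set (EuclideanSpace ℝ (Fin n)) :=
  {ξ | ∀ y, g y ≥ g x + ⟪ξ, y - x⟫ - ε}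

/-- The subdifferential of `g` at `x`. -/
def subdiff {n : ℕ} (g : EuclideanSpace ℝ (Fin n) → ℝ)
    (x : EuclideanSpace ℝ (Fin n)) : Set (EuclideanSpace ℝ (Fin n)) :=
  {ξ | ∀ y, g y ≥ g x + ⟪ξ, y - x⟫}

/-- The t-spherical subdifferential of `g` at `x`. -/
def sphSubdiff {n : ℕ} (g : EuclideanSpace ℝ (Fin n) → ℝ) (t : ℝ)
    (x : EuclideanSpace ℝ (Fin n)) : Set (EuclideanSpace ℝ (Fin n)) :=
  convexHull ℝ {ξ | ∃ d : EuclideanSpace ℝ (Fin n), ‖d‖ = 1 ∧ ξ ∈ subdiff g (x + t • d)}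

theorem local_min_is_inf_stationary {n : ℕ}
    (f₁ f₂ f : EuclideanSpace ℝ (Fin n) → ℝ)
    (h₁ : ConvexOn ℝ Set.univ f₁) (h₂ : ConvexOn ℝ Set.univ f₂)
    (hf : ∀ x, f x = f₁ x - f₂ x)
    (xbar : EuclideanSpace ℝ (Fin n))
    (hloc : ∃ U : Set (EuclideanSpace ℝ (Fin n)),
      IsOpen U ∧ xbar ∈ U ∧ ∀ y ∈ U, f xbar ≤ f y) :
    subdiff f₂ xbar ⊆ subdiff f₁ xbar := by

  obtain ⟨U, hU, hxU, hmin⟩ := hloc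
  intro ξ hξ y
  -- local subgradient inequality for f₁
  have hlocal : ∀ z ∈ U, f₁ z ≥ f₁ xbar + ⟪ξ, z - xbar⟫ := by
    intro z hz
    have h2 := hξ z
    have h3 := hmin z hz
    rw [hf, hf] at h3
    linarith
  obtain ⟨ε, hε, hball⟩ := Metric.isOpen_iff.mp hU xbar hxU
  by_cases hy : y = xbar
  · simp [hy]
  · set r := ‖y - xbar‖ with hr
    have hrpos : 0 < r := by
      simpa [hr] using sub_ne_zero.mpr hy
    set t : ℝ := min 1 (ε / (2 * r)) with ht
    have ht0 : 0 < t := lt_min one_pos (by positivity)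
    have ht1 : t ≤ 1 := min_le_left _ _
    set z := xbar + t • (y - xbar) with hz
    have hzU : z ∈ U := by
      apply hball
      rw [Metric.mem_ball, dist_eq_norm]
      have : z - xbar = t • (y - xbar) := by simp [hz]
      rw [this, norm_smul, Real.norm_eq_abs, abs_of_pos ht0]
      have : t ≤ ε / (2 * r) := min_le_right _ _
      calc t * ‖y - xbar‖ ≤ (ε / (2 * r)) * r := by
              exact mul_le_mul this le_rfl (norm_nonneg _) (by positivity)
        _ = ε / 2 := by field_simp
        _ < ε := by linarith
    have hconv : f₁ z ≤ (1 - t) * f₁ xbar + t * f₁ y := by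
      have := h₁.2 (Set.mem_univ xbar) (Set.mem_univ y)
        (by linarith : (0:ℝ) ≤ 1 - t) ht0.le (by ring)
      have hzeq : z = (1 - t) • xbar + t • y := by
        simp [hz]; module
      simpa [hzeq, smul_eq_mul] using this
    have hlz := hlocal z hzU
    have hin : ⟪ξ, z - xbar⟫ = t * ⟪ξ, y - xbar⟫ := by
      have : z - xbar = t • (y - xbar) := by simp [hz]
      rw [this, real_inner_smul_right]
    rw [hin] at hlz
    nlinarith [hlz, hconv]
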